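/- An extension of a divisible abelian group by a finite abelian group splits: if E is an abelian group fitting in a short exact sequence 0 → F → E → D → 0 with F finite and D divisible, then E ≅ D ⊕ F' for some quotient F' of F. -/

import Mathlib

/-!
STATEMENT 0: An extension of a divisible abelian group by a finite abelian group splits:
if `0 → F → E → D → 0` is a short exact sequence of abelian groups with `F` finite and `D`
divisible, then `E ≅ D ⊕ F'` for some quotient `F'` of `F`.
-/


open AddSubgroup Function

universe u

/-- If division by every prime is possible in a subgroup, division by every positive
natural is possible. -/
theorem DES.div_of_prime_div {E : Type u} [AddCommGroup E] (A : AddSubgroup E)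
    (h : ∀ q : ℕ, q.Prime → ∀ x ∈ A, ∃ y ∈ A, q • y = x) :
    ∀ x ∈ A, ∀ n : ℕ, 0 < n → ∃ y ∈ A, n • y = x := by
  intro x hx n
  induction n using Nat.strong_induction_on generalizing x with
  | _ n ih =>
    intro hn
    rcases eq_or_lt_of_le (show 1 ≤ n by omega) with h1 | h1
    · exact ⟨x, hx, by rw [← h1]; simp⟩
    · have hq := Nat.minFac_prime (by omega : n ≠ 1)
      obtain ⟨y₁, hy₁A, hy₁⟩ := h n.minFac hq x hx
      have hlt : n / n.minFac < n := Nat.div_lt_self (by omega) hq.one_lt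
      have hpos : 0 < n / n.minFac :=
        Nat.div_pos (Nat.minFac_le (by omega)) (Nat.minFac_pos n)
      obtain ⟨y, hyA, hy⟩ := ih _ hlt y₁ hy₁A hpos
      refine ⟨y, hyA, ?_⟩
      rw [← Nat.mul_div_cancel' (Nat.minFac_dvd n), mul_smul, hy, hy₁]

/-- Convert membership form divisibility to subtype form. -/
theorem DES.div_subtype {E : Type u} [AddCommGroup E] (A : AddSubgroup E)
    (h : ∀ x ∈ A, ∀ n : ℕ, 0 < n → ∃ y ∈ A, n • y = x) :
    ∀ (x : A) (n : ℕ), 0 < n → ∃ y : A, n • y = x := by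
  rintro ⟨x, hx⟩ n hn
  obtain ⟨y, hy, hyx⟩ := h x hx n hn
  exact ⟨⟨y, hy⟩, Subtype.ext (by simpa using hyx)⟩

/-- A divisible subgroup admits a retraction. -/
theorem DES.exists_retraction {E : Type u} [AddCommGroup E] (A : AddSubgroup E)
    (hdiv : ∀ (x : A) (n : ℕ), 0 < n → ∃ y : A, n • y = x) :
    ∃ r : E →+ A, ∀ a : A, r (a : E) = a := by
  classical
  have hd : ∀ (x : A) (m : ℤ), m ≠ 0 → ∃ y : A, m • y = x := by
    intro x m hm
    obtain ⟨y, hy⟩ := hdiv x m.natAbs (Int.natAbs_pos.mpr hm)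
    rcases Int.natAbs_eq m with he | he
    · exact ⟨y, by rw [he, natCast_zsmul, hy]⟩
    · exact ⟨-y, by rw [he, neg_zsmul, smul_neg, neg_neg, natCast_zsmul, hy]⟩
  letI : DivisibleBy A ℤ :=
    { div := fun a m => if hm : m = 0 then 0 else Classical.choose (hd a m hm)
      div_zero := fun a => by simp
      div_cancel := fun {m} a hm => by
        simpa [hm] using Classical.choose_spec (hd a m hm) }
  obtain ⟨r, hr⟩ := (Module.Baer.of_divisible (A : Type u)).extension_property_addMonoidHom
      A.subtype A.subtype_injective (AddMonoidHom.id A)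
  exact ⟨r, fun a => by simpa using DFunLike.congr_fun hr a⟩

/-- Divisibility passes along surjections. -/
theorem DES.div_of_surj {G H : Type*} [AddCommGroup G] [AddCommGroup H] (f : G →+ H)
    (hf : Surjective f) (hdiv : ∀ (x : G) (n : ℕ), 0 < n → ∃ y, n • y = x) :
    ∀ (x : H) (n : ℕ), 0 < n → ∃ y, n • y = x := by
  intro x n hn
  obtain ⟨g, rfl⟩ := hf x
  obtain ⟨y, hy⟩ := hdiv g n hn
  exact ⟨f y, by rw [← map_nsmul, hy]⟩


theorem DES.quot_cyclic_prime {G : Type u} [AddCommGroup G]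
    (hdiv : ∀ (x : G) (n : ℕ), 0 < n → ∃ y, n • y = x)
    (p : ℕ) (hp : p.Prime) (c : G) (hc : addOrderOf c = p) :
    Nonempty (G ≃+ G ⧸ AddSubgroup.zmultiples c) := by
  classical
  have hppos := hp.pos
  -- a sequence of successive `p`-th "roots" of `c`
  let a : ℕ → G := fun k => Nat.rec c (fun _ x => Classical.choose (hdiv x p hppos)) k
  have ha0 : a 0 = c := rfl
  have ha : ∀ k, p • a (k + 1) = a k := fun k => Classical.choose_spec (hdiv (a k) p hppos)
  have hcne : c ≠ 0 := by
    intro h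
    rw [h, addOrderOf_zero] at hc
    exact hp.one_lt.ne' hc.symm
  have hpc : p • c = 0 := by rw [← hc]; exact addOrderOf_nsmul_eq_zero c
  have hak_c : ∀ k, p ^ k • a k = c := by
    intro k
    induction k with
    | zero => simpa using ha0
    | succ k ih => rw [pow_succ, mul_smul, ha k, ih]
  have htor : ∀ k, p ^ (k + 1) • a k = 0 := by
    intro k
    rw [pow_succ', mul_smul, hak_c k, hpc]
  have hord : ∀ k, addOrderOf (a k) = p ^ (k + 1) := by
    intro k
    have h2 : addOrderOf (a k) ∣ p ^ (k + 1) := addOrderOf_dvd_of_nsmul_eq_zero (htor k)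
    obtain ⟨j, hj, hje⟩ := (Nat.dvd_prime_pow hp).mp h2
    rcases Nat.lt_or_ge j (k + 1) with hjk | hjk
    · exfalso
      have hj0 : p ^ j • a k = 0 := by rw [← hje]; exact addOrderOf_nsmul_eq_zero (a k)
      have : p ^ k • a k = 0 := by
        have : p ^ k = p ^ (k - j) * p ^ j := by
          rw [← pow_add]
          congr 1
          omega
        rw [this, mul_smul, hj0, smul_zero]
      exact hcne (by rw [← hak_c k, this])
    · have : j = k + 1 := le_antisymm hj hjk
      rw [hje, this]
  -- the Prüfer-like subgroup generated by the sequence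
  have hmono : Monotone fun k => zmultiples (a k) := by
    apply monotone_nat_of_le_succ
    intro k x hx
    obtain ⟨m, rfl⟩ := mem_zmultiples_iff.mp hx
    rw [← ha k, smul_comm]
    exact nsmul_mem (zsmul_mem (mem_zmultiples _) m) p
  set H : AddSubgroup G := ⨆ k, zmultiples (a k) with hHdef
  have hmemH : ∀ x, x ∈ H ↔ ∃ k, ∃ m : ℤ, m • a k = x := by
    intro x
    rw [hHdef, mem_iSup_of_directed (hmono.directed_le)]
    simp only [mem_zmultiples_iff]
  have haH : ∀ k, a k ∈ H := fun k => (hmemH _).mpr ⟨k, 1, one_smul _ _⟩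
  have hcH : c ∈ H := ha0 ▸ haH 0
  -- divisibility of H by p
  have hHp : ∀ x ∈ H, ∃ y ∈ H, p • y = x := by
    intro x hx
    obtain ⟨k, m, rfl⟩ := (hmemH x).mp hx
    refine ⟨m • a (k + 1), zsmul_mem (haH (k + 1)) m, ?_⟩
    rw [smul_comm, ha k]
  -- kernel of multiplication by p on H
  have hHker : ∀ x ∈ H, p • x = 0 → x ∈ zmultiples c := by
    intro x hx hpx
    obtain ⟨k, m, rfl⟩ := (hmemH x).mp hx
    have : ((p : ℤ) * m) • a k = 0 := by
      rw [mul_smul, natCast_zsmul]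
      exact hpx
    have hdvd : ((p ^ (k + 1) : ℕ) : ℤ) ∣ (p : ℤ) * m := by
      rw [← hord k]
      exact addOrderOf_dvd_iff_zsmul_eq_zero.mpr this
    have hdvd2 : ((p ^ k : ℕ) : ℤ) ∣ m := by
      rcases hdvd with ⟨t, ht⟩
      push_cast at ht
      refine ⟨t, ?_⟩
      have hpne : (p : ℤ) ≠ 0 := by exact_mod_cast hppos.ne'
      have : (p : ℤ) * m = (p : ℤ) * ((p : ℤ) ^ k * t) := by rw [ht]; ring
      push_cast
      exact mul_left_cancel₀ hpne this
    obtain ⟨t, rfl⟩ := hdvd2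
    rw [mul_comm, mul_smul, natCast_zsmul, hak_c k]
    exact zsmul_mem (mem_zmultiples c) t
  -- full divisibility of H
  have hHdiv : ∀ x ∈ H, ∀ n : ℕ, 0 < n → ∃ y ∈ H, n • y = x := by
    refine DES.div_of_prime_div H ?_
    intro q hq x hx
    rcases eq_or_ne q p with rfl | hqp
    · exact hHp x hx
    · obtain ⟨k, m, rfl⟩ := (hmemH x).mp hx
      have hco : IsCoprime (q : ℤ) ((p ^ (k + 1) : ℕ) : ℤ) := by
        rw [Int.isCoprime_iff_gcd_eq_one, Int.gcd_natCast_natCast]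
        exact ((Nat.coprime_primes hq hp).mpr hqp).pow_right _
      obtain ⟨A, B, hAB⟩ := hco
      have hP0 : (((p ^ (k + 1) : ℕ) : ℤ)) • a k = 0 := by
        rw [natCast_zsmul]; exact htor k
      have key : ((q : ℤ) * (A * m)) • a k = m • a k := by
        have h1 : (q : ℤ) * (A * m) = m * (A * q) := by ring
        have h2 : m = m * (A * (q : ℤ)) + m * B * ((p ^ (k + 1) : ℕ) : ℤ) := by
          linear_combination (-m) * hAB
        rw [h1]
        conv_rhs => rw [h2]
        rw [add_zsmul, mul_smul (m * B), hP0, smul_zero, add_zero]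
      refine ⟨(A * m) • a k, zsmul_mem (haH k) _, ?_⟩
      rw [← natCast_zsmul, ← mul_smul]
      exact key
  -- retraction onto H
  obtain ⟨r, hr⟩ := DES.exists_retraction H (DES.div_subtype H hHdiv)
  have hrmem : ∀ x (hx : x ∈ H), ((r x : G)) = x := by
    intro x hx
    have := hr ⟨x, hx⟩
    rw [this]
  -- the endomorphism φ
  let φ : G →+ G := AddMonoidHom.mk' (fun x => p • (r x : G) + (x - (r x : G)))
    (by
      intro x y
      simp only [map_add, AddSubgroup.coe_add, smul_add]
      abel)
  have hφ : ∀ x, φ x = p • (r x : G) + (x - (r x : G)) := fun _ => rfl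
  have hφsurj : Surjective φ := by
    intro y
    obtain ⟨h₁, hh₁, hph₁⟩ := hHp ((r y : G)) (r y).2
    refine ⟨h₁ + (y - (r y : G)), ?_⟩
    have hr1 : r (h₁ + (y - (r y : G))) = ⟨h₁, hh₁⟩ := by
      have e1 : r h₁ = ⟨h₁, hh₁⟩ := hr ⟨h₁, hh₁⟩
      rw [map_add, map_sub, e1, hr (r y)]
      simp
    rw [hφ, hr1]
    simp only []
    rw [hph₁]
    abel
  have hφker : φ.ker = zmultiples c := by
    ext x
    constructor
    · intro hxk
      have hx0 : φ x = 0 := hxk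
      rw [hφ] at hx0
      have hrx : p • (r x) = 0 := by
        have := congrArg r hx0
        rw [map_add, map_sub, map_nsmul, hr (r x), map_zero] at this
        simpa using this
      have hrxG : p • ((r x : G)) = 0 := by
        have := congrArg (AddSubgroup.subtype H) hrx
        simpa using this
      have hxH : x = ((r x : G)) := by
        rw [hrxG, zero_add] at hx0
        have : x - ((r x : G)) = 0 := hx0
        linear_combination (norm := abel) this
      have hpx : p • x = 0 := by rw [hxH, hrxG]
      exact hHker x (hxH ▸ (r x).2) hpx
    · intro hxc
      obtain ⟨m, rfl⟩ := mem_zmultiples_iff.mp hxc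
      have hmH : m • c ∈ H := zsmul_mem hcH m
      show φ _ = 0
      rw [hφ, hrmem _ hmH]
      simp only [sub_self, add_zero]
      rw [smul_comm, hpc, smul_zero]
  have e := QuotientAddGroup.quotientKerEquivOfSurjective φ hφsurj
  exact ⟨((QuotientAddGroup.quotientAddEquivOfEq hφker.symm).trans e).symm⟩

theorem DES.quot_finite_aux : ∀ (N : ℕ) (G : Type u) (_ : AddCommGroup G),
    (∀ (x : G) (n : ℕ), 0 < n → ∃ y, n • y = x) →
    ∀ K : AddSubgroup G, Finite K → Nat.card K = N → Nonempty (G ≃+ G ⧸ K) := by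
  intro N
  induction N using Nat.strong_induction_on with
  | _ N ih =>
    intro G _ hdiv K hfin hcard
    have hpos : 0 < Nat.card K := Nat.card_pos
    rcases eq_or_lt_of_le (show 1 ≤ Nat.card K by omega) with h1 | h1
    · -- K = ⊥
      have hbot : K = ⊥ := AddSubgroup.card_eq_one.mp h1.symm
      subst hbot
      exact ⟨QuotientAddGroup.quotientBot.symm⟩
    · -- K nontrivial
      rw [hcard] at h1
      have hN1 : N ≠ 1 := by omega
      have hp : N.minFac.Prime := Nat.minFac_prime hN1
      haveI : Fact N.minFac.Prime := ⟨hp⟩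
      have hdvd : N.minFac ∣ Nat.card K := hcard ▸ Nat.minFac_dvd N
      obtain ⟨c₀, hc₀⟩ := exists_prime_addOrderOf_dvd_card' N.minFac hdvd
      have hc : addOrderOf (c₀ : G) = N.minFac := by
        rw [AddSubgroup.addOrderOf_coe]; exact hc₀
      have hcne : (c₀ : G) ≠ 0 := by
        intro h
        rw [h, addOrderOf_zero] at hc
        exact hp.one_lt.ne' hc.symm
      set C := AddSubgroup.zmultiples (c₀ : G) with hC
      have hCK : C ≤ K := by
        intro x hx
        obtain ⟨m, rfl⟩ := AddSubgroup.mem_zmultiples_iff.mp hx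
        exact K.zsmul_mem c₀.2 m
      obtain ⟨e1⟩ := DES.quot_cyclic_prime hdiv N.minFac hp (c₀ : G) hc
      have hdiv' : ∀ (x : G ⧸ C) (n : ℕ), 0 < n → ∃ y, n • y = x :=
        DES.div_of_surj (QuotientAddGroup.mk' C) (QuotientAddGroup.mk'_surjective C) hdiv
      set K' := K.map (QuotientAddGroup.mk' C) with hK'
      -- surjection from K onto K'
      let ψ : K → K' := fun k => ⟨QuotientAddGroup.mk' C k, AddSubgroup.mem_map_of_mem _ k.2⟩
      have hψsurj : Surjective ψ := by
        rintro ⟨y, hy⟩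
        rw [hK', AddSubgroup.mem_map] at hy
        obtain ⟨x, hx, rfl⟩ := hy
        exact ⟨⟨x, hx⟩, rfl⟩
      haveI : Finite K' := Finite.of_surjective ψ hψsurj
      have hψnotinj : ¬ Injective ψ := by
        intro hinj
        have h0 : ψ ⟨(c₀ : G), c₀.2⟩ = ψ ⟨0, K.zero_mem⟩ := by
          apply Subtype.ext
          show QuotientAddGroup.mk' C (c₀ : G) = QuotientAddGroup.mk' C 0
          rw [map_zero]
          exact (QuotientAddGroup.eq_zero_iff _).mpr (AddSubgroup.mem_zmultiples _)
        have h2 := hinj h0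
        exact hcne (by simpa using congrArg (fun z : K => (z : G)) h2)
      haveI := Fintype.ofFinite K
      haveI := Fintype.ofFinite K'
      have hlt : Nat.card K' < N := by
        rw [← hcard, Nat.card_eq_fintype_card, Nat.card_eq_fintype_card]
        exact Fintype.card_lt_of_surjective_not_injective ψ hψsurj hψnotinj
      obtain ⟨e2⟩ := ih (Nat.card K') hlt (G ⧸ C) inferInstance hdiv' K' inferInstance rfl
      have e3 := QuotientAddGroup.quotientQuotientEquivQuotient C K hCK
      exact ⟨(e1.trans e2).trans e3⟩

theorem divisible_extension_splits
    (F E D : Type*) [AddCommGroup F] [AddCommGroup E] [AddCommGroup D]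
    [Finite F]
    (hdiv : ∀ (d : D) (n : ℕ), 0 < n → ∃ x : D, n • x = d)
    (ι : F →+ E) (π : E →+ D)
    (hι : Function.Injective ι) (hπ : Function.Surjective π)
    (hexact : ι.range = π.ker) :
    ∃ (F' : Type) (_ : AddCommGroup F') (q : F →+ F'),
      Function.Surjective q ∧ Nonempty (E ≃+ D × F') := by
  classical
  set n := Nat.card F with hn
  have hnpos : 0 < n := Nat.card_pos
  have hnF : ∀ f : F, n • f = 0 := fun f => card_nsmul_eq_zero'
  let μ : ℕ → E →+ E := fun m => AddMonoidHom.mk' (fun e => m • e) (fun a b => smul_add m a b)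
  let S : ℕ → AddSubgroup E := fun k => (μ (n ^ k)).range ⊓ ι.range
  have hSle : ∀ k, S (k + 1) ≤ S k := by
    intro k x hx
    obtain ⟨⟨z, hz⟩, hxι⟩ := hx
    refine ⟨⟨n • z, ?_⟩, hxι⟩
    show n ^ k • n • z = x
    rw [← mul_smul, ← pow_succ]
    exact hz
  have hFinι : Finite ι.range := by
    refine Finite.of_surjective
      (fun f : F => (⟨ι f, AddMonoidHom.mem_range.mpr ⟨f, rfl⟩⟩ : ι.range)) ?_
    rintro ⟨x, hx⟩
    obtain ⟨f, rfl⟩ := hx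
    exact ⟨f, rfl⟩
  have hFinS : ∀ k, Finite (S k) := fun k =>
    Finite.of_injective (AddSubgroup.inclusion (inf_le_right : S k ≤ ι.range))
      (AddSubgroup.inclusion_injective _)
  have hstab : ∃ k, Nat.card (S (k + 1)) = Nat.card (S k) := by
    by_contra hcon
    push_neg at hcon
    have hdec : ∀ k, Nat.card (S (k + 1)) < Nat.card (S k) := fun k =>
      haveI := hFinS k
      lt_of_le_of_ne (AddSubgroup.card_le_of_le (hSle k)) (hcon k)
    have hbound : ∀ k, Nat.card (S k) + k ≤ Nat.card (S 0) := by
      intro k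
      induction k with
      | zero => omega
      | succ k ih => have := hdec k; omega
    have hpos0 : 0 < Nat.card (S (Nat.card (S 0))) :=
      haveI := hFinS (Nat.card (S 0)); Nat.card_pos
    have := hbound (Nat.card (S 0))
    omega
  obtain ⟨k, hk⟩ := hstab
  have hSeq : S (k + 1) = S k :=
    haveI := hFinS k
    AddSubgroup.eq_of_le_of_card_ge (hSle k) hk.ge
  -- the divisible subgroup G
  have hstep : (μ (n ^ (k + 1))).range = (μ (n ^ k)).range := by
    apply le_antisymm
    · rintro x ⟨z, hz⟩
      refine ⟨n • z, ?_⟩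
      show n ^ k • n • z = x
      rw [← mul_smul, ← pow_succ]
      exact hz
    · rintro x ⟨z, hz⟩
      have hz' : n ^ k • z = x := hz
      obtain ⟨d, hd⟩ := hdiv (π z) n hnpos
      obtain ⟨w, hw⟩ := hπ d
      have hπx : π (x - n ^ (k + 1) • w) = 0 := by
        rw [← hz']
        simp only [map_sub, map_nsmul]
        rw [hw, pow_succ, mul_smul, hd, sub_self]
      have hy : x - n ^ (k + 1) • w ∈ S k := by
        constructor
        · refine ⟨z - n • w, ?_⟩
          show n ^ k • (z - n • w) = x - n ^ (k + 1) • w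
          rw [smul_sub, hz', ← mul_smul, ← pow_succ]
        · rw [hexact]
          exact AddMonoidHom.mem_ker.mpr hπx
      rw [← hSeq] at hy
      obtain ⟨v, hv⟩ := hy.1
      have hv' : n ^ (k + 1) • v = x - n ^ (k + 1) • w := hv
      refine ⟨v + w, ?_⟩
      show n ^ (k + 1) • (v + w) = x
      rw [smul_add, hv']
      abel
  set G := (μ (n ^ k)).range with hG
  have hGn : ∀ x ∈ G, ∃ y ∈ G, n • y = x := by
    intro x hx
    rw [← hstep] at hx
    obtain ⟨z, hz⟩ := hx
    have hz' : n ^ (k + 1) • z = x := hz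
    refine ⟨n ^ k • z, ⟨z, rfl⟩, ?_⟩
    rw [← hz', ← mul_smul, ← pow_succ']
  have hGprime : ∀ q : ℕ, q.Prime → ∀ x ∈ G, ∃ y ∈ G, q • y = x := by
    intro q hq x hx
    by_cases hqn : q ∣ n
    · obtain ⟨t, hqt⟩ := hqn
      obtain ⟨y₁, hy₁G, hy₁⟩ := hGn x hx
      refine ⟨t • y₁, AddSubgroup.nsmul_mem G hy₁G t, ?_⟩
      rw [← mul_smul, ← hqt, hy₁]
    · obtain ⟨u, hu⟩ := hx
      have hu' : n ^ k • u = x := hu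
      obtain ⟨d, hd⟩ := hdiv (π u) q hq.pos
      obtain ⟨w, hw⟩ := hπ d
      have hker : u - q • w ∈ ι.range := by
        rw [hexact]
        refine AddMonoidHom.mem_ker.mpr ?_
        rw [map_sub, map_nsmul, hw, hd, sub_self]
      obtain ⟨f, hf⟩ := hker
      have hco : IsCoprime (q : ℤ) (n : ℤ) := by
        rw [Int.isCoprime_iff_gcd_eq_one, Int.gcd_natCast_natCast]
        exact (Nat.Prime.coprime_iff_not_dvd hq).mpr hqn
      obtain ⟨A, B, hAB⟩ := hco
      have hfq : ι f = q • ι (A • f) := by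
        have h2 : (B * (n : ℤ)) • f = 0 := by
          rw [mul_smul, natCast_zsmul, hnF, smul_zero]
        have h1 : f = (q : ℤ) • (A • f) := by
          calc f = (A * (q : ℤ) + B * (n : ℤ)) • f := by rw [hAB, one_zsmul]
            _ = (A * (q : ℤ)) • f + (B * (n : ℤ)) • f := add_zsmul f _ _
            _ = ((q : ℤ) * A) • f := by rw [h2, add_zero, mul_comm]
            _ = (q : ℤ) • (A • f) := mul_smul _ _ _
        rw [← natCast_zsmul (ι (A • f)) q, ← map_zsmul, ← h1]
      refine ⟨n ^ k • (ι (A • f) + w), ⟨ι (A • f) + w, rfl⟩, ?_⟩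
      rw [smul_comm q (n ^ k), smul_add, ← hfq, hf]
      have : u - q • w + q • w = u := by abel
      rw [this, hu']
  have hGsub := DES.div_subtype G (DES.div_of_prime_div G hGprime)
  have hπG : ∀ d : D, ∃ g, g ∈ G ∧ π g = d := by
    intro d
    obtain ⟨d', hd'⟩ := hdiv d (n ^ k) (pow_pos hnpos k)
    obtain ⟨w, hw⟩ := hπ d'
    exact ⟨n ^ k • w, ⟨w, rfl⟩, by rw [map_nsmul, hw, hd']⟩
  have hEGF : ∀ e : E, ∃ g ∈ G, ∃ f : F, e = g + ι f := by
    intro e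
    obtain ⟨g, hgG, hgπ⟩ := hπG (π e)
    have hmem : e - g ∈ ι.range := by
      rw [hexact]
      refine AddMonoidHom.mem_ker.mpr ?_
      rw [map_sub, hgπ, sub_self]
    obtain ⟨f, hf⟩ := hmem
    exact ⟨g, hgG, f, by rw [hf]; abel⟩
  obtain ⟨r, hr⟩ := DES.exists_retraction G hGsub
  -- the splitting E ≃+ G × ker r
  let spl : E ≃+ G × r.ker :=
    { toFun := fun e => (r e, ⟨e - (r e : E),
        by rw [AddMonoidHom.mem_ker, map_sub, hr (r e), sub_self]⟩)
      invFun := fun pr => (pr.1 : E) + (pr.2 : E)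
      left_inv := fun e => by simp
      right_inv := fun pr => by
        obtain ⟨g, x⟩ := pr
        have hx0 : r (x : E) = 0 := x.2
        refine Prod.ext ?_ (Subtype.ext ?_)
        · show r ((g : E) + (x : E)) = g
          rw [map_add, hr g, hx0, add_zero]
        · show (g : E) + (x : E) - ((r ((g : E) + (x : E)) : G) : E) = (x : E)
          rw [map_add, hr g, hx0, add_zero]
          abel
      map_add' := by
        intro a b
        refine Prod.ext ?_ (Subtype.ext ?_)
        · show r (a + b) = r a + r b
          rw [map_add]
        · show (a + b) - ((r (a + b) : G) : E) = (a - r a) + (b - r b)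
          rw [map_add, AddSubgroup.coe_add]
          abel }
  -- the surjection F → ker r
  let ρ : F →+ r.ker := AddMonoidHom.mk'
    (fun f => ⟨ι f - (r (ι f) : E),
      by rw [AddMonoidHom.mem_ker, map_sub, hr (r (ι f)), sub_self]⟩)
    (fun a b => by
      apply Subtype.ext
      show ι (a + b) - ((r (ι (a + b)) : G) : E) = (ι a - r (ι a)) + (ι b - r (ι b))
      rw [map_add, map_add, AddSubgroup.coe_add]
      abel)
  have hρsurj : Function.Surjective ρ := by
    rintro ⟨x, hx⟩
    have hx0 : r x = 0 := hx
    obtain ⟨g, hgG, f, hgf⟩ := hEGF x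
    refine ⟨f, Subtype.ext ?_⟩
    show ι f - ((r (ι f) : G) : E) = x
    have e1 : r g = ⟨g, hgG⟩ := hr ⟨g, hgG⟩
    have h2 : (0 : G) = ⟨g, hgG⟩ + r (ι f) := by
      rw [← hx0, hgf, map_add, e1]
    have h1 : r (ι f) = -(⟨g, hgG⟩ : G) := eq_neg_of_add_eq_zero_right h2.symm
    rw [h1, hgf]
    have hcoe : ((-(⟨g, hgG⟩ : G) : G) : E) = -g := rfl
    rw [hcoe]
    abel
  -- identify G with D
  let π' : G →+ D := π.comp G.subtype
  have hπ'surj : Function.Surjective π' := by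
    intro d
    obtain ⟨g, hgG, hgπ⟩ := hπG d
    exact ⟨⟨g, hgG⟩, hgπ⟩
  have hKfin : Finite π'.ker := by
    have hmem : ∀ y : π'.ker, ((y : G) : E) ∈ ι.range := by
      rintro ⟨⟨x, hxG⟩, hxk⟩
      have hx : π x = 0 := hxk
      rw [hexact]
      exact AddMonoidHom.mem_ker.mpr hx
    have hjinj : Function.Injective fun y => Classical.choose (hmem y) := by
      intro y₁ y₂ he
      have h1 := Classical.choose_spec (hmem y₁)
      have h2 := Classical.choose_spec (hmem y₂)
      simp only at he
      rw [he, h2] at h1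
      exact Subtype.ext (Subtype.ext h1.symm)
    exact Finite.of_injective _ hjinj
  obtain ⟨eG⟩ := DES.quot_finite_aux (Nat.card π'.ker) G inferInstance hGsub π'.ker hKfin rfl
  let eD : (G ⧸ π'.ker) ≃+ D := QuotientAddGroup.quotientKerEquivOfSurjective π' hπ'surj
  let eψ : G ≃+ D := eG.trans eD
  -- the quotient of F
  let e2 : (F ⧸ ρ.ker) ≃+ r.ker := QuotientAddGroup.quotientKerEquivOfSurjective ρ hρsurj
  haveI : Finite (F ⧸ ρ.ker) := Finite.of_surjective _ (QuotientAddGroup.mk'_surjective ρ.ker)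
  haveI : Small.{0} (F ⧸ ρ.ker) := Countable.toSmall _
  refine ⟨Shrink.{0} (F ⧸ ρ.ker), inferInstance,
    ((Shrink.addEquiv (α := F ⧸ ρ.ker)).symm.toAddMonoidHom.comp (QuotientAddGroup.mk' ρ.ker)),
    ?_, ?_⟩
  · have : Function.Surjective (Shrink.addEquiv (α := F ⧸ ρ.ker)).symm :=
      (Shrink.addEquiv (α := F ⧸ ρ.ker)).symm.surjective
    exact this.comp (QuotientAddGroup.mk'_surjective ρ.ker)
  · exact ⟨spl.trans (AddEquiv.prodCongr eψ
      (e2.symm.trans (Shrink.addEquiv (α := F ⧸ ρ.ker)).symm))⟩
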